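/- arXiv:1902.00947 — 3 statements merged into one kernel-verified Lean document; each statement's English description precedes it below -/
import Mathlib

section
/- Let f be L-smooth convex and h closed proper convex on ℝ^d, F = f + h with minimizer x⋆, and x_{k+1} = prox_{h/L}(x_k - (1/L) f'(x_k)). Let s_{k+1} ∈ ∂h(x_{k+1}) be the subgradient implicitly defined by the prox step, and set F'(x_{k+1}) = f'(x_{k+1}) + s_{k+1}. Then for any b_k, d_k ≥ 0 and any F'(x_k) ∈ ∂F(x_k), with d_{k+1} = d_k + 2L and b_{k+1} = b_k + 1 + d_k/L, the potential φ_k = d_k (F(x_k) - F(x⋆)) + b_k ‖F'(x_k)‖² + L² ‖x_k - x⋆‖² satisfies φ_{k+1} ≤ φ_k. -/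
open Finset

open RealInnerProductSpace

variable {E : Type*} [NormedAddCommGroup E] [InnerProductSpace ℝ E] [CompleteSpace E]

lemma line_hasDerivAt (f : E → ℝ) (f' : E → E) (hgrad : ∀ x, HasGradientAt f (f' x) x)
    (x y : E) (t : ℝ) :
    HasDerivAt (fun s : ℝ => f (x + s • (y - x))) ⟪f' (x + t • (y - x)), y - x⟫ t := by
  have h1 : HasDerivAt (fun s : ℝ => x + s • (y - x)) (y - x) t := by
    simpa using ((hasDerivAt_id t).smul_const (y - x)).const_add x
  have h2 := (hasGradientAt_iff_hasFDerivAt.mp (hgrad (x + t • (y - x)))).comp_hasDerivAt t h1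
  exact h2

lemma grad_convex_ineq (f : E → ℝ) (f' : E → E) (hgrad : ∀ x, HasGradientAt f (f' x) x)
    (hconv : ConvexOn ℝ Set.univ f) (x y : E) :
    f x + ⟪f' x, y - x⟫ ≤ f y := by
  have heq : (fun s : ℝ => f (x + s • (y - x))) = f ∘ (AffineMap.lineMap x y : ℝ →ᵃ[ℝ] E) := by
    funext s
    simp only [Function.comp_apply, AffineMap.lineMap_apply, vsub_eq_sub, vadd_eq_add]
    rw [add_comm]
  have haff : ConvexOn ℝ Set.univ (fun s : ℝ => f (x + s • (y - x))) := by
    rw [heq]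
    have := hconv.comp_affineMap (AffineMap.lineMap x y : ℝ →ᵃ[ℝ] E)
    simpa using this
  have hd := line_hasDerivAt f f' hgrad x y 0
  have hslope := haff.le_slope_of_hasDerivAt (Set.mem_univ (0:ℝ)) (Set.mem_univ (1:ℝ))
    one_pos (by simpa using hd)
  simp [slope_def_field] at hslope
  linarith

lemma descent_lemma (f : E → ℝ) (f' : E → E) (hgrad : ∀ x, HasGradientAt f (f' x) x)
    (L : ℝ) (hL : 0 < L) (hsmooth : ∀ x y, ‖f' x - f' y‖ ≤ L * ‖x - y‖) (x y : E) :
    f y ≤ f x + ⟪f' x, y - x⟫ + L / 2 * ‖y - x‖ ^ 2 := by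
  set φ : ℝ → ℝ := fun t => f (x + t • (y - x)) - t * ⟪f' x, y - x⟫ - L * t ^ 2 / 2 * ‖y - x‖ ^ 2
    with hφdef
  have hφd : ∀ t : ℝ, HasDerivAt φ
      (⟪f' (x + t • (y - x)), y - x⟫ - ⟪f' x, y - x⟫ - L * t * ‖y - x‖ ^ 2) t := by
    intro t
    have h1 := line_hasDerivAt f f' hgrad x y t
    have h2 : HasDerivAt (fun t : ℝ => t * ⟪f' x, y - x⟫) ⟪f' x, y - x⟫ t := by
      simpa using (hasDerivAt_id t).mul_const (⟪f' x, y - x⟫)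
    have h3 : HasDerivAt (fun t : ℝ => L * t ^ 2 / 2 * ‖y - x‖ ^ 2)
        (L * t * ‖y - x‖ ^ 2) t := by
      have := ((hasDerivAt_pow 2 t).const_mul L).div_const 2
      have := this.mul_const (‖y - x‖ ^ 2)
      exact this.congr_deriv (by push_cast; ring)
    exact (h1.sub h2).sub h3
  have hanti : AntitoneOn φ (Set.Icc 0 1) := by
    apply antitoneOn_of_deriv_nonpos (convex_Icc 0 1)
    · exact (Differentiable.continuous (fun t => (hφd t).differentiableAt)).continuousOn
    · exact fun t _ => (hφd t).differentiableAt.differentiableWithinAt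
    · intro t ht
      rw [interior_Icc] at ht
      rw [(hφd t).deriv]
      have hcs : ⟪f' (x + t • (y - x)) - f' x, y - x⟫ ≤ ‖f' (x + t • (y - x)) - f' x‖ * ‖y - x‖ :=
        real_inner_le_norm _ _
      have hlip : ‖f' (x + t • (y - x)) - f' x‖ ≤ L * (t * ‖y - x‖) := by
        have := hsmooth (x + t • (y - x)) x
        simpa [norm_smul, abs_of_pos ht.1] using this
      have h5 : ⟪f' (x + t • (y - x)) - f' x, y - x⟫ ≤ L * t * ‖y - x‖ ^ 2 := by
        calc ⟪f' (x + t • (y - x)) - f' x, y - x⟫ ≤ ‖f' (x + t • (y - x)) - f' x‖ * ‖y - x‖ := hcs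
        _ ≤ L * (t * ‖y - x‖) * ‖y - x‖ := by
            apply mul_le_mul_of_nonneg_right hlip (norm_nonneg _)
        _ = L * t * ‖y - x‖ ^ 2 := by ring
      rw [inner_sub_left] at h5
      linarith
  have h01 := hanti (Set.mem_Icc.mpr ⟨le_refl 0, zero_le_one⟩)
    (Set.mem_Icc.mpr ⟨zero_le_one, le_refl 1⟩) zero_le_one
  simp [hφdef] at h01
  linarith

lemma interp_ineq (f : E → ℝ) (f' : E → E) (hgrad : ∀ x, HasGradientAt f (f' x) x)
    (hconv : ConvexOn ℝ Set.univ f)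
    (L : ℝ) (hL : 0 < L) (hsmooth : ∀ x y, ‖f' x - f' y‖ ≤ L * ‖x - y‖) (x y : E)
    (hA : ∀ x y, f x + ⟪f' x, y - x⟫ ≤ f y) :
    f x + ⟪f' x, y - x⟫ + 1 / (2 * L) * ‖f' x - f' y‖ ^ 2 ≤ f y := by
  set z := y - (1 / L) • (f' y - f' x) with hz
  have h1 : f x + ⟪f' x, z - x⟫ ≤ f z := hA x z
  have h2 : f z ≤ f y + ⟪f' y, z - y⟫ + L / 2 * ‖z - y‖ ^ 2 :=
    descent_lemma f f' hgrad L hL hsmooth y z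
  have hzy : z - y = -((1 / L) • (f' y - f' x)) := by rw [hz]; abel
  have e1 : ⟪f' x, z - x⟫ = ⟪f' x, y - x⟫ - (1 / L) * ⟪f' x, f' y - f' x⟫ := by
    have : z - x = (y - x) - (1 / L) • (f' y - f' x) := by rw [hz]; abel
    rw [this, inner_sub_right, real_inner_smul_right]
  have e2 : ⟪f' y, z - y⟫ = -(1 / L) * ⟪f' y, f' y - f' x⟫ := by
    rw [hzy, inner_neg_right, real_inner_smul_right]; ring
  have e3 : L / 2 * ‖z - y‖ ^ 2 = 1 / (2 * L) * ‖f' y - f' x‖ ^ 2 := by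
    rw [hzy, norm_neg, norm_smul]
    rw [Real.norm_eq_abs, abs_of_pos (by positivity : (0:ℝ) < 1 / L)]
    field_simp
  have e4 : ⟪f' y, f' y - f' x⟫ - ⟪f' x, f' y - f' x⟫ = ‖f' y - f' x‖ ^ 2 := by
    rw [← inner_sub_left, real_inner_self_eq_norm_sq]
  have e5 : ‖f' x - f' y‖ = ‖f' y - f' x‖ := norm_sub_rev _ _
  rw [e1] at h1
  rw [e2, e3] at h2
  rw [e5]
  have e6 : 1/L * ⟪f' y, f' y - f' x⟫ - 1/L * ⟪f' x, f' y - f' x⟫ = 1/L * ‖f' y - f' x‖ ^ 2 := by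
    rw [← mul_sub, e4]
  have e7 : 1/(2*L) * ‖f' y - f' x‖ ^ 2 * 2 = 1/L * ‖f' y - f' x‖ ^ 2 := by
    field_simp
  linarith [h1, h2, e6, e7]

lemma combine_cert (L c bk fk f1 fs hk h1 hs Puu Pvv Paa Pbb Pee Puv Pua Pub Pvb Pab Peu Peb : ℝ)
    (hc : 0 ≤ c) (hbk : 0 ≤ bk)
    (T1 : 0 ≤ L*(fk-f1) - (Puv+Pvb) - 1/2*(Puu-2*Puv+Pvv))
    (T2 : 0 ≤ L*(f1-fk) + (Puu+Pub) - 1/2*(Puu-2*Puv+Pvv))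
    (T5 : 0 ≤ L*(fs-fk) + L*Peu)
    (TH1 : 0 ≤ L*(hk-h1) - (Pub+Pbb))
    (TH2 : 0 ≤ L*(hs-h1) + L*Peb - (Pub+Pbb))
    (TH4 : 0 ≤ L*(h1-hk) + (Pua+Pab))
    (S1 : 0 ≤ Puu-2*Puv+Pvv) (S2 : 0 ≤ Paa-2*Pab+Pbb) :
    (c*L+2*L)*((f1+h1)-(fs+hs)) + (bk+1+c)*(Pvv+2*Pvb+Pbb)
        + (L^2*Pee - 2*L*(Peu+Peb) + (Puu+2*Pub+Pbb))
      ≤ c*L*((fk+hk)-(fs+hs)) + bk*(Puu+2*Pua+Paa) + L^2*Pee := by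
  nlinarith [mul_nonneg hc T1, mul_nonneg hbk T1, mul_nonneg hc T2, mul_nonneg hbk T2,
             mul_nonneg hc TH1, mul_nonneg hbk TH1, mul_nonneg hbk TH4,
             mul_nonneg hc S1, mul_nonneg hbk S1, mul_nonneg hbk S2,
             T1, T2, T5, TH1, TH2, TH4, S1, S2]



/-- Potential decrease for the proximal gradient method. -/
theorem prox_grad_potential_decrease {d : ℕ} (L : ℝ) (hL : 0 < L)
    (f h : EuclideanSpace ℝ (Fin d) → ℝ)
    (f' : EuclideanSpace ℝ (Fin d) → EuclideanSpace ℝ (Fin d))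
    (hgrad : ∀ x, HasGradientAt f (f' x) x)
    (hfconv : ConvexOn ℝ Set.univ f)
    (hsmooth : ∀ x y, ‖f' x - f' y‖ ≤ L * ‖x - y‖)
    (hhconv : ConvexOn ℝ Set.univ h)
    (xstar : EuclideanSpace ℝ (Fin d))
    (hmin : ∀ y, f xstar + h xstar ≤ f y + h y)
    (bk dk : ℝ) (hbk : 0 ≤ bk) (hdk : 0 ≤ dk)
    (xk xk1 sk sk1 : EuclideanSpace ℝ (Fin d))
    -- sk is a subgradient of h at xk (so f' xk + sk ∈ ∂F(xk))
    (hsk : ∀ y, h y ≥ h xk + (inner ℝ sk (y - xk) : ℝ))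
    -- sk1 is the subgradient of h at xk1 implicitly defined by the prox step
    (hsk1 : ∀ y, h y ≥ h xk1 + (inner ℝ sk1 (y - xk1) : ℝ))
    (hstep : xk1 = xk - (1 / L) • (f' xk + sk1)) :
    (dk + 2 * L) * ((f xk1 + h xk1) - (f xstar + h xstar))
        + (bk + 1 + dk / L) * ‖f' xk1 + sk1‖ ^ 2 + L ^ 2 * ‖xk1 - xstar‖ ^ 2
      ≤ dk * ((f xk + h xk) - (f xstar + h xstar))
        + bk * ‖f' xk + sk‖ ^ 2 + L ^ 2 * ‖xk - xstar‖ ^ 2 := by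
  have hA : ∀ x y, f x + ⟪f' x, y - x⟫ ≤ f y := grad_convex_ineq f f' hgrad hfconv
  -- vector identities
  have hxx : xk - xk1 = (1 / L) • (f' xk + sk1) := by rw [hstep]; exact sub_sub_cancel _ _
  have hxx' : xk1 - xk = -((1 / L) • (f' xk + sk1)) := by rw [hstep]; abel
  have hes : xk1 - xstar = (xk - xstar) - (1 / L) • (f' xk + sk1) := by rw [hstep]; abel
  have hxs : xstar - xk1 = -(xk - xstar) + (1 / L) • (f' xk + sk1) := by rw [hstep]; abel
  -- scalar expansions
  have ln1 : ‖f' xk1 - f' xk‖ ^ 2 = ‖f' xk‖ ^ 2 - 2 * ⟪f' xk, f' xk1⟫ + ‖f' xk1‖ ^ 2 := by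
    rw [norm_sub_sq_real, real_inner_comm (f' xk1) (f' xk)]; ring
  have ln2 : ‖f' xk - f' xk1‖ ^ 2 = ‖f' xk‖ ^ 2 - 2 * ⟪f' xk, f' xk1⟫ + ‖f' xk1‖ ^ 2 := by
    rw [norm_sub_sq_real]
  have l1 : L * ⟪f' xk1, xk - xk1⟫ = ⟪f' xk, f' xk1⟫ + ⟪f' xk1, sk1⟫ := by
    rw [hxx, real_inner_smul_right, inner_add_right, real_inner_comm (f' xk1) (f' xk)]
    field_simp
  have l2 : L * ⟪f' xk, xk1 - xk⟫ = -(‖f' xk‖ ^ 2 + ⟪f' xk, sk1⟫) := by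
    rw [hxx', inner_neg_right, real_inner_smul_right, inner_add_right,
      real_inner_self_eq_norm_sq]
    field_simp
  have l5 : ⟪f' xk, xstar - xk⟫ = -⟪xk - xstar, f' xk⟫ := by
    rw [show xstar - xk = -(xk - xstar) by abel, inner_neg_right,
      real_inner_comm (f' xk) (xk - xstar)]
  have lH1 : L * ⟪sk1, xk - xk1⟫ = ⟪f' xk, sk1⟫ + ‖sk1‖ ^ 2 := by
    rw [hxx, real_inner_smul_right, inner_add_right, real_inner_comm sk1 (f' xk),
      real_inner_self_eq_norm_sq]
    field_simp
  have lH2 : L * ⟪sk1, xstar - xk1⟫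
      = -(L * ⟪xk - xstar, sk1⟫) + (⟪f' xk, sk1⟫ + ‖sk1‖ ^ 2) := by
    rw [hxs, inner_add_right, inner_neg_right, real_inner_smul_right, inner_add_right,
      real_inner_comm sk1 (f' xk), real_inner_comm sk1 (xk - xstar),
      real_inner_self_eq_norm_sq]
    field_simp
  have lH4 : L * ⟪sk, xk1 - xk⟫ = -(⟪f' xk, sk⟫ + ⟪sk, sk1⟫) := by
    rw [hxx', inner_neg_right, real_inner_smul_right, inner_add_right,
      real_inner_comm sk (f' xk)]
    field_simp
  -- goal norm expansions
  have gv : ‖f' xk1 + sk1‖ ^ 2 = ‖f' xk1‖ ^ 2 + 2 * ⟪f' xk1, sk1⟫ + ‖sk1‖ ^ 2 :=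
    norm_add_sq_real _ _
  have gu : ‖f' xk + sk‖ ^ 2 = ‖f' xk‖ ^ 2 + 2 * ⟪f' xk, sk⟫ + ‖sk‖ ^ 2 :=
    norm_add_sq_real _ _
  have gx : L ^ 2 * ‖xk1 - xstar‖ ^ 2
      = L ^ 2 * ‖xk - xstar‖ ^ 2
        - 2 * L * (⟪xk - xstar, f' xk⟫ + ⟪xk - xstar, sk1⟫)
        + (‖f' xk‖ ^ 2 + 2 * ⟪f' xk, sk1⟫ + ‖sk1‖ ^ 2) := by
    rw [hes, norm_sub_sq_real, real_inner_smul_right, inner_add_right, norm_smul,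
      mul_pow, norm_add_sq_real, Real.norm_eq_abs, abs_of_pos (by positivity : (0:ℝ) < 1 / L)]
    field_simp
  -- the six slack inequalities, cleared of denominators
  have hI1 := interp_ineq f f' hgrad hfconv L hL hsmooth xk1 xk hA
  have hI2 := interp_ineq f f' hgrad hfconv L hL hsmooth xk xk1 hA
  have T1 : 0 ≤ L * (f xk - f xk1) - (⟪f' xk, f' xk1⟫ + ⟪f' xk1, sk1⟫)
      - 1/2 * (‖f' xk‖ ^ 2 - 2 * ⟪f' xk, f' xk1⟫ + ‖f' xk1‖ ^ 2) := by
    have h0 : 0 ≤ f xk - f xk1 - ⟪f' xk1, xk - xk1⟫ - 1/(2*L) * ‖f' xk1 - f' xk‖ ^ 2 := by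
      linarith [hI1]
    have h1 := mul_nonneg hL.le h0
    have h2 : L * (f xk - f xk1 - ⟪f' xk1, xk - xk1⟫ - 1/(2*L) * ‖f' xk1 - f' xk‖ ^ 2)
        = L * (f xk - f xk1) - L * ⟪f' xk1, xk - xk1⟫ - 1/2 * ‖f' xk1 - f' xk‖ ^ 2 := by
      field_simp
    rw [h2, l1, ln1] at h1
    linarith
  have T2 : 0 ≤ L * (f xk1 - f xk) + (‖f' xk‖ ^ 2 + ⟪f' xk, sk1⟫)
      - 1/2 * (‖f' xk‖ ^ 2 - 2 * ⟪f' xk, f' xk1⟫ + ‖f' xk1‖ ^ 2) := by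
    have h0 : 0 ≤ f xk1 - f xk - ⟪f' xk, xk1 - xk⟫ - 1/(2*L) * ‖f' xk - f' xk1‖ ^ 2 := by
      linarith [hI2]
    have h1 := mul_nonneg hL.le h0
    have h2 : L * (f xk1 - f xk - ⟪f' xk, xk1 - xk⟫ - 1/(2*L) * ‖f' xk - f' xk1‖ ^ 2)
        = L * (f xk1 - f xk) - L * ⟪f' xk, xk1 - xk⟫ - 1/2 * ‖f' xk - f' xk1‖ ^ 2 := by
      field_simp
    rw [h2, l2, ln2] at h1
    linarith
  have T5 : 0 ≤ L * (f xstar - f xk) + L * ⟪xk - xstar, f' xk⟫ := by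
    have h0 : 0 ≤ f xstar - f xk + ⟪xk - xstar, f' xk⟫ := by
      have := hA xk xstar
      rw [l5] at this
      linarith
    have h1 := mul_nonneg hL.le h0
    linarith [h1, mul_add L (f xstar - f xk) ⟪xk - xstar, f' xk⟫]
  have TH1 : 0 ≤ L * (h xk - h xk1) - (⟪f' xk, sk1⟫ + ‖sk1‖ ^ 2) := by
    have h0 : 0 ≤ h xk - h xk1 - ⟪sk1, xk - xk1⟫ := by linarith [hsk1 xk]
    have h1 := mul_nonneg hL.le h0
    have h2 : L * (h xk - h xk1 - ⟪sk1, xk - xk1⟫)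
        = L * (h xk - h xk1) - L * ⟪sk1, xk - xk1⟫ := by ring
    rw [h2, lH1] at h1
    linarith
  have TH2 : 0 ≤ L * (h xstar - h xk1) + L * ⟪xk - xstar, sk1⟫
      - (⟪f' xk, sk1⟫ + ‖sk1‖ ^ 2) := by
    have h0 : 0 ≤ h xstar - h xk1 - ⟪sk1, xstar - xk1⟫ := by linarith [hsk1 xstar]
    have h1 := mul_nonneg hL.le h0
    have h2 : L * (h xstar - h xk1 - ⟪sk1, xstar - xk1⟫)
        = L * (h xstar - h xk1) - L * ⟪sk1, xstar - xk1⟫ := by ring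
    rw [h2, lH2] at h1
    linarith
  have TH4 : 0 ≤ L * (h xk1 - h xk) + (⟪f' xk, sk⟫ + ⟪sk, sk1⟫) := by
    have h0 : 0 ≤ h xk1 - h xk - ⟪sk, xk1 - xk⟫ := by linarith [hsk xk1]
    have h1 := mul_nonneg hL.le h0
    have h2 : L * (h xk1 - h xk - ⟪sk, xk1 - xk⟫)
        = L * (h xk1 - h xk) - L * ⟪sk, xk1 - xk⟫ := by ring
    rw [h2, lH4] at h1
    linarith
  have S1 : 0 ≤ ‖f' xk‖ ^ 2 - 2 * ⟪f' xk, f' xk1⟫ + ‖f' xk1‖ ^ 2 := by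
    rw [← ln2]; positivity
  have S2 : 0 ≤ ‖sk‖ ^ 2 - 2 * ⟪sk, sk1⟫ + ‖sk1‖ ^ 2 := by
    have : ‖sk - sk1‖ ^ 2 = ‖sk‖ ^ 2 - 2 * ⟪sk, sk1⟫ + ‖sk1‖ ^ 2 := norm_sub_sq_real _ _
    rw [← this]; positivity
  -- substitute dk = q * L
  obtain ⟨q, hq0, rfl⟩ : ∃ q, 0 ≤ q ∧ dk = q * L :=
    ⟨dk / L, div_nonneg hdk hL.le, (div_mul_cancel₀ dk hL.ne').symm⟩
  have hqL : q * L / L = q := by field_simp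
  rw [hqL, gv, gu, gx]
  have key := combine_cert L q bk (f xk) (f xk1) (f xstar) (h xk) (h xk1) (h xstar)
    (‖f' xk‖ ^ 2) (‖f' xk1‖ ^ 2) (‖sk‖ ^ 2) (‖sk1‖ ^ 2) (‖xk - xstar‖ ^ 2)
    ⟪f' xk, f' xk1⟫ ⟪f' xk, sk⟫ ⟪f' xk, sk1⟫ ⟪f' xk1, sk1⟫ ⟪sk, sk1⟫
    ⟪xk - xstar, f' xk⟫ ⟪xk - xstar, sk1⟫
    hq0 hbk T1 T2 T5 TH1 TH2 TH4 S1 S2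
  linarith [key]
end

section
/- Under over-parameterization (f_i'(x⋆) = 0 for all i, each f_i convex L-smooth), the primal-averaging scheme y_{k+1} = (k/(k+1)) y_k + (1/(k+1)) x_k, x_{k+1} = x_k - (1/L) f'_{i_k}(y_{k+1}) satisfies E[f(y_k)] - f⋆ ≤ L‖x_0 - x⋆‖²/(2k) for all k ≥ 1, where the expectation is over the i.i.d. uniform indices i_0, …, i_{k-1}. -/
open Finset


section Analytic

variable {F : Type*} [NormedAddCommGroup F] [InnerProductSpace ℝ F] [CompleteSpace F]

lemma line_hasDerivAt_s8 {f : F → ℝ} {g : F → F} (hg : ∀ x, HasGradientAt f (g x) x)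
    (a v : F) (t : ℝ) :
    HasDerivAt (fun s : ℝ => f (a + s • v)) ((inner ℝ (g (a + t • v)) v : ℝ)) t := by
  have h1 : HasDerivAt (fun s : ℝ => a + s • v) v t := by
    simpa using ((hasDerivAt_id t).smul_const v).const_add a
  have h2 := (hg (a + t • v)).hasFDerivAt.comp_hasDerivAt t h1
  simpa [InnerProductSpace.toDual_apply_apply, Function.comp_def] using h2

/-- Gradient inequality for convex differentiable functions. -/
lemma grad_convex_le {f : F → ℝ} {g : F → F} (hg : ∀ x, HasGradientAt f (g x) x)
    (hc : ConvexOn ℝ Set.univ f) (a b : F) :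
    (inner ℝ (g a) (b - a) : ℝ) ≤ f b - f a := by
  have hder := line_hasDerivAt_s8 hg a (b - a) 0
  simp only [zero_smul, add_zero] at hder
  have hconv : ConvexOn ℝ Set.univ (fun s : ℝ => f (a + s • (b - a))) := by
    have := hc.comp_affineMap (AffineMap.lineMap a b : ℝ →ᵃ[ℝ] F)
    simp only [Set.preimage_univ] at this
    refine this.congr fun s _ => ?_
    rw [Function.comp_apply, AffineMap.lineMap_apply, vsub_eq_sub, vadd_eq_add, add_comm]
  have := hconv.le_slope_of_hasDerivAt (Set.mem_univ 0) (Set.mem_univ 1) zero_lt_one hder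
  simpa [slope_def_field] using this

/-- Descent lemma for L-smooth functions. -/
lemma smooth_descent {f : F → ℝ} {g : F → F} {L : ℝ} (hL : 0 < L)
    (hg : ∀ x, HasGradientAt f (g x) x)
    (hlip : ∀ x y, ‖g x - g y‖ ≤ L * ‖x - y‖) (a b : F) :
    f b ≤ f a + (inner ℝ (g a) (b - a) : ℝ) + L / 2 * ‖b - a‖ ^ 2 := by
  set v := b - a with hv
  have hgc : Continuous g := by
    have : LipschitzWith (Real.toNNReal L) g := by
      apply LipschitzWith.of_dist_le_mul
      intro p q
      rw [dist_eq_norm, dist_eq_norm, Real.coe_toNNReal L hL.le]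
      exact hlip p q
    exact this.continuous
  have hcont : Continuous fun t : ℝ => (inner ℝ (g (a + t • v)) v : ℝ) :=
    (hgc.comp (by continuity)).inner continuous_const
  have key : f b - f a = ∫ t in (0:ℝ)..1, (inner ℝ (g (a + t • v)) v : ℝ) := by
    have := intervalIntegral.integral_eq_sub_of_hasDerivAt
      (f := fun s : ℝ => f (a + s • v))
      (fun t _ => line_hasDerivAt_s8 hg a v t) (hcont.intervalIntegrable 0 1)
    rw [this]
    simp [hv]
  have hbound : ∫ t in (0:ℝ)..1, (inner ℝ (g (a + t • v)) v : ℝ)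
      ≤ ∫ t in (0:ℝ)..1, ((inner ℝ (g a) v : ℝ) + (L * ‖v‖ ^ 2) * t) := by
    apply intervalIntegral.integral_mono_on zero_le_one (hcont.intervalIntegrable 0 1)
      (Continuous.intervalIntegrable (by continuity) 0 1)
    intro t ht
    have e1 : (inner ℝ (g (a + t • v)) v : ℝ) - inner ℝ (g a) v
        = inner ℝ (g (a + t • v) - g a) v := (inner_sub_left _ _ _).symm
    have h3 : (inner ℝ (g (a + t • v) - g a) v : ℝ) ≤ ‖g (a + t • v) - g a‖ * ‖v‖ :=
      real_inner_le_norm _ _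
    have h4 : ‖g (a + t • v) - g a‖ ≤ L * (t * ‖v‖) := by
      have := hlip (a + t • v) a
      simpa [norm_smul, Real.norm_eq_abs, abs_of_nonneg ht.1] using this
    nlinarith [norm_nonneg v, norm_nonneg (g (a + t • v) - g a)]
  have hint : ∫ t in (0:ℝ)..1, ((inner ℝ (g a) v : ℝ) + (L * ‖v‖ ^ 2) * t)
      = (inner ℝ (g a) v : ℝ) + L / 2 * ‖v‖ ^ 2 := by
    rw [intervalIntegral.integral_add (intervalIntegrable_const)
      (intervalIntegral.intervalIntegrable_id.const_mul _)]
    rw [intervalIntegral.integral_const_mul, integral_id]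
    simp
    ring
  linarith [key, hbound, hint.le, hint.ge]

/-- Interpolation inequality for convex L-smooth functions. -/
lemma smooth_interp {f : F → ℝ} {g : F → F} {L : ℝ} (hL : 0 < L)
    (hg : ∀ x, HasGradientAt f (g x) x) (hc : ConvexOn ℝ Set.univ f)
    (hlip : ∀ x y, ‖g x - g y‖ ≤ L * ‖x - y‖) (a b : F) :
    f a - f b ≤ (inner ℝ (g a) (a - b) : ℝ) - 1 / (2 * L) * ‖g b - g a‖ ^ 2 := by
  set u := g b - g a with hu
  set w := b - (1 / L) • u with hw
  have h1 : f a - (inner ℝ (g a) a : ℝ) ≤ f w - inner ℝ (g a) w := by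
    have := grad_convex_le hg hc a w
    have e : (inner ℝ (g a) (w - a) : ℝ) = inner ℝ (g a) w - inner ℝ (g a) a :=
      inner_sub_right _ _ _
    linarith [e ▸ this]
  have h2 : f w ≤ f b + (inner ℝ (g b) (w - b) : ℝ) + L / 2 * ‖w - b‖ ^ 2 :=
    smooth_descent hL hg hlip b w
  have ewb : w - b = -((1 / L) • u) := by rw [hw]; abel
  have e2 : (inner ℝ (g b) (w - b) : ℝ) = -(1 / L) * inner ℝ (g b) u := by
    rw [ewb, inner_neg_right, real_inner_smul_right]; ring
  have e3 : ‖w - b‖ ^ 2 = (1 / L) ^ 2 * ‖u‖ ^ 2 := by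
    rw [ewb, norm_neg, norm_smul, Real.norm_eq_abs, abs_of_nonneg (by positivity : (0:ℝ) ≤ 1 / L)]
    ring
  have e4 : (inner ℝ (g a) w : ℝ) = inner ℝ (g a) b - (1 / L) * inner ℝ (g a) u := by
    rw [hw, inner_sub_right, real_inner_smul_right]
  have e5 : (inner ℝ (g b) u : ℝ) - inner ℝ (g a) u = ‖u‖ ^ 2 := by
    rw [← inner_sub_left, ← real_inner_self_eq_norm_sq, hu]
  have e6 : (inner ℝ (g a) (a - b) : ℝ) = inner ℝ (g a) a - inner ℝ (g a) b :=
    inner_sub_right _ _ _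
  have hL' : L ≠ 0 := hL.ne'
  have comb : f a ≤ f b + (inner ℝ (g a) a : ℝ) - inner ℝ (g a) b - 1 / (2 * L) * ‖u‖ ^ 2 := by
    have expand : f b + (-(1 / L) * (inner ℝ (g b) u : ℝ)) + L / 2 * ((1 / L) ^ 2 * ‖u‖ ^ 2)
        - (inner ℝ (g a) b - (1 / L) * inner ℝ (g a) u)
        = f b - inner ℝ (g a) b - 1 / (2 * L) * ‖u‖ ^ 2
          - (1 / L) * ((inner ℝ (g b) u : ℝ) - inner ℝ (g a) u) + 1 / L * ‖u‖ ^ 2 := by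
      field_simp
      ring
    have : f w - (inner ℝ (g a) w : ℝ)
        ≤ f b - inner ℝ (g a) b - 1 / (2 * L) * ‖u‖ ^ 2 := by
      rw [e4]
      calc f w - ((inner ℝ (g a) b : ℝ) - 1 / L * inner ℝ (g a) u)
          ≤ f b + (-(1 / L) * (inner ℝ (g b) u : ℝ)) + L / 2 * ((1 / L) ^ 2 * ‖u‖ ^ 2)
            - ((inner ℝ (g a) b : ℝ) - 1 / L * inner ℝ (g a) u) := by
            rw [← e2, ← e3]; linarith
        _ = f b - inner ℝ (g a) b - 1 / (2 * L) * ‖u‖ ^ 2 := by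
            rw [expand, e5]; field_simp; ring
    linarith
  rw [e6]
  linarith [comb]

end Analytic

section Step
variable {F : Type*} [NormedAddCommGroup F] [InnerProductSpace ℝ F] [CompleteSpace F]

lemma step_avg {n : ℕ} {L : ℝ} (hL : 0 < L)
    (fi : Fin n → F → ℝ) (fi' : Fin n → F → F)
    (hgrad : ∀ i x, HasGradientAt (fi i) (fi' i x) x)
    (hconv : ∀ i, ConvexOn ℝ Set.univ (fi i))
    (hsmooth : ∀ i x y, ‖fi' i x - fi' i y‖ ≤ L * ‖x - y‖)
    (xstar : F) (hstar : ∀ i, fi' i xstar = 0)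
    (k : ℕ) (p q r : F)
    (hr : r = ((k : ℝ) / ((k : ℝ) + 1)) • q + (1 / ((k : ℝ) + 1)) • p) :
    ∑ j : Fin n, (L / 2 * ‖(p - (1 / L) • fi' j r) - xstar‖ ^ 2)
      ≤ (n : ℝ) * (L / 2 * ‖p - xstar‖ ^ 2)
        - (k : ℝ) * ((∑ i, fi i r) - ∑ i, fi i q)
        - ((∑ i, fi i r) - ∑ i, fi i xstar) := by
  have hk1 : ((k : ℝ) + 1) ≠ 0 := by positivity
  have hknn : (0 : ℝ) ≤ (k : ℝ) := Nat.cast_nonneg k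
  set z := p - xstar with hzdef
  have hp : p - xstar = (k : ℝ) • (r - q) + (r - xstar) := by
    rw [hr]
    match_scalars <;> field_simp <;> ring
  have perj : ∀ j : Fin n,
      L / 2 * ‖(p - (1 / L) • fi' j r) - xstar‖ ^ 2
        ≤ L / 2 * ‖p - xstar‖ ^ 2 - (k : ℝ) * (fi j r - fi j q) - (fi j r - fi j xstar) := by
    intro j
    set g := fi' j r with hg
    have hxe : (p - (1 / L) • g) - xstar = z - (1 / L) • g := by rw [hzdef]; abel
    have hexp : ‖z - (1 / L) • g‖ ^ 2
        = ‖z‖ ^ 2 - 2 * ((1 / L) * inner ℝ z g) + (1 / L) ^ 2 * ‖g‖ ^ 2 := by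
      rw [norm_sub_sq_real, real_inner_smul_right, norm_smul, Real.norm_eq_abs,
        abs_of_nonneg (by positivity : (0:ℝ) ≤ 1 / L)]
      ring
    have hzg : (inner ℝ g z : ℝ) = (k : ℝ) * inner ℝ g (r - q) + inner ℝ g (r - xstar) := by
      rw [hzdef, hp, inner_add_right, real_inner_smul_right]
    have h1 : fi j r - fi j q ≤ (inner ℝ g (r - q) : ℝ) := by
      have := grad_convex_le (hgrad j) (hconv j) r q
      have e : (inner ℝ g (q - r) : ℝ) = - inner ℝ g (r - q) := by
        rw [show q - r = -(r - q) by abel, inner_neg_right]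
      linarith [e ▸ this]
    have h2 : fi j r - fi j xstar + 1 / (2 * L) * ‖g‖ ^ 2 ≤ (inner ℝ g (r - xstar) : ℝ) := by
      have := smooth_interp hL (hgrad j) (hconv j) (hsmooth j) r xstar
      rw [hstar j, zero_sub, norm_neg] at this
      linarith
    have c1 : L / 2 * (2 * ((1 / L) * ((k : ℝ) * (inner ℝ g (r - q) : ℝ) + inner ℝ g (r - xstar))))
        = (k : ℝ) * (inner ℝ g (r - q) : ℝ) + inner ℝ g (r - xstar) := by
      field_simp
    have c2 : L / 2 * ((1 / L) ^ 2 * ‖g‖ ^ 2) = 1 / (2 * L) * ‖g‖ ^ 2 := by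
      field_simp
    have hcomm : (inner ℝ z g : ℝ) = inner ℝ g z := real_inner_comm g z
    have hk1' := mul_le_mul_of_nonneg_left h1 hknn
    rw [hxe, hexp, hzdef]
    calc L / 2 * (‖p - xstar‖ ^ 2 - 2 * (1 / L * inner ℝ (p - xstar) g) + (1 / L) ^ 2 * ‖g‖ ^ 2)
        = L / 2 * ‖p - xstar‖ ^ 2
          - ((k : ℝ) * (inner ℝ g (r - q) : ℝ) + (inner ℝ g (r - xstar) : ℝ))
          + 1 / (2 * L) * ‖g‖ ^ 2 := by
          have : (inner ℝ (p - xstar) g : ℝ)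
              = (k : ℝ) * (inner ℝ g (r - q) : ℝ) + inner ℝ g (r - xstar) := by
            rw [← hzdef] at *
            rw [hcomm, hzg]
          rw [this]
          linear_combination c2 - c1
      _ ≤ L / 2 * ‖p - xstar‖ ^ 2 - (k : ℝ) * (fi j r - fi j q) - (fi j r - fi j xstar) := by
          linarith
  calc ∑ j : Fin n, (L / 2 * ‖(p - (1 / L) • fi' j r) - xstar‖ ^ 2)
      ≤ ∑ j : Fin n, (L / 2 * ‖p - xstar‖ ^ 2 - (k : ℝ) * (fi j r - fi j q)
          - (fi j r - fi j xstar)) := Finset.sum_le_sum fun j _ => perj j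
    _ = (n : ℝ) * (L / 2 * ‖p - xstar‖ ^ 2)
        - (k : ℝ) * ((∑ i, fi i r) - ∑ i, fi i q)
        - ((∑ i, fi i r) - ∑ i, fi i xstar) := by
        simp only [Finset.sum_sub_distrib, ← Finset.mul_sum, Finset.sum_const,
          Finset.card_univ, Fintype.card_fin, nsmul_eq_mul]
        ring

end Step

lemma sum_update {n N : ℕ} (k : Fin N) (F : (Fin N → Fin n) → ℝ) :
    ∑ ω : Fin N → Fin n, ∑ j : Fin n, F (Function.update ω k j)
      = (n : ℝ) * ∑ ω : Fin N → Fin n, F ω := by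
  classical
  set e := Equiv.funSplitAt k (Fin n) with he
  have h1 : ∀ (p : Fin n × ({ i // i ≠ k } → Fin n)) (j : Fin n),
      Function.update (e.symm p) k j = e.symm (j, p.2) := by
    intro p j; funext i
    rcases eq_or_ne i k with h | h
    · subst h
      simp [he, Equiv.funSplitAt, Equiv.piSplitAt]
    · simp [Function.update_of_ne h, he, Equiv.funSplitAt, Equiv.piSplitAt, h]
  rw [← Equiv.sum_comp e.symm (fun ω => ∑ j : Fin n, F (Function.update ω k j)),
    ← Equiv.sum_comp e.symm F]
  simp only [h1]
  rw [Fintype.sum_prod_type, Fintype.sum_prod_type]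
  have : ∀ a : Fin n, ∑ r : { i // i ≠ k } → Fin n, ∑ j : Fin n, F (e.symm (j, r))
      = ∑ j : Fin n, ∑ r : { i // i ≠ k } → Fin n, F (e.symm (j, r)) :=
    fun a => Finset.sum_comm
  rw [Finset.sum_congr rfl (fun a _ => this a), Finset.sum_const, Finset.card_univ,
    Fintype.card_fin, nsmul_eq_mul]
/-- Telescoped rate for primal-averaging SGD under over-parameterization:
`E f(y_N) - f⋆ ≤ L‖x0 - x⋆‖² / (2N)`, the expectation being over the i.i.d.
uniform indices. -/
theorem overparam_primal_averaging_rate {d n N : ℕ} (hn : 0 < n) (hN : 1 ≤ N)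
    (L : ℝ) (hL : 0 < L)
    (fi : Fin n → EuclideanSpace ℝ (Fin d) → ℝ)
    (fi' : Fin n → EuclideanSpace ℝ (Fin d) → EuclideanSpace ℝ (Fin d))
    (hgrad : ∀ i x, HasGradientAt (fi i) (fi' i x) x)
    (hconv : ∀ i, ConvexOn ℝ Set.univ (fi i))
    (hsmooth : ∀ i x y, ‖fi' i x - fi' i y‖ ≤ L * ‖x - y‖)
    (xstar : EuclideanSpace ℝ (Fin d)) (hstar : ∀ i, fi' i xstar = 0)
    (f : EuclideanSpace ℝ (Fin d) → ℝ)
    (hf : ∀ x, f x = (n : ℝ)⁻¹ * ∑ i, fi i x)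
    (x0 : EuclideanSpace ℝ (Fin d))
    (x y : (Fin N → Fin n) → ℕ → EuclideanSpace ℝ (Fin d))
    (hx0 : ∀ ω, x ω 0 = x0) (hy0 : ∀ ω, y ω 0 = x0)
    (hystep : ∀ ω (k : Fin N),
      y ω (k.val + 1) = ((k.val : ℝ) / ((k.val : ℝ) + 1)) • y ω k.val
        + (1 / ((k.val : ℝ) + 1)) • x ω k.val)
    (hxstep : ∀ ω (k : Fin N),
      x ω (k.val + 1) = x ω k.val - (1 / L) • fi' (ω k) (y ω (k.val + 1))) :
    ((n : ℝ) ^ N)⁻¹ * (∑ ω : Fin N → Fin n, f (y ω N)) - f xstar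
      ≤ L * ‖x0 - xstar‖ ^ 2 / (2 * (N : ℝ)) := by
  classical
  have hnR : (0 : ℝ) < n := by exact_mod_cast hn
  have hcard : (0 : ℝ) < (n : ℝ) ^ N := by positivity
  have hNR : (0 : ℝ) < N := by exact_mod_cast hN
  have hystep' : ∀ ω (m : ℕ) (hm : m < N),
      y ω (m + 1) = ((m : ℝ) / ((m : ℝ) + 1)) • y ω m + (1 / ((m : ℝ) + 1)) • x ω m :=
    fun ω m hm => hystep ω ⟨m, hm⟩
  have hxstep' : ∀ ω (m : ℕ) (hm : m < N),
      x ω (m + 1) = x ω m - (1 / L) • fi' (ω ⟨m, hm⟩) (y ω (m + 1)) :=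
    fun ω m hm => hxstep ω ⟨m, hm⟩
  have hsumf : ∀ u, ∑ i, fi i u = (n : ℝ) * f u := by
    intro u
    rw [hf u]
    field_simp
  -- dependence on past coordinates only
  have dep : ∀ m : ℕ, m ≤ N → ∀ ω ω' : Fin N → Fin n,
      (∀ j : Fin N, (j : ℕ) < m → ω j = ω' j) → x ω m = x ω' m ∧ y ω m = y ω' m := by
    intro m
    induction m with
    | zero => intro _ ω ω' _; rw [hx0, hx0, hy0, hy0]; exact ⟨rfl, rfl⟩
    | succ m ih =>
      intro hm ω ω' hagree
      have hmN : m < N := hm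
      obtain ⟨hxm, hym⟩ := ih (Nat.le_of_lt hmN) ω ω'
        (fun j hj => hagree j (Nat.lt_succ_of_lt hj))
      have hyy : y ω (m + 1) = y ω' (m + 1) := by
        rw [hystep' ω m hmN, hystep' ω' m hmN, hxm, hym]
      refine ⟨?_, hyy⟩
      rw [hxstep' ω m hmN, hxstep' ω' m hmN, hxm, hyy,
        hagree ⟨m, hmN⟩ (Nat.lt_succ_self m)]
  set Φ : ℕ → (Fin N → Fin n) → ℝ :=
    fun m ω => (m : ℝ) * (f (y ω m) - f xstar) + L / 2 * ‖x ω m - xstar‖ ^ 2 with hΦ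
  -- one step of the potential
  have step : ∀ (m : ℕ) (hm : m < N),
      ∑ ω : Fin N → Fin n, Φ (m + 1) ω ≤ ∑ ω : Fin N → Fin n, Φ m ω := by
    intro m hm
    have per : ∀ ω : Fin N → Fin n,
        ∑ j : Fin n, Φ (m + 1) (Function.update ω ⟨m, hm⟩ j) ≤ (n : ℝ) * Φ m ω := by
      intro ω
      have hagree : ∀ j : Fin n, ∀ i : Fin N, (i : ℕ) < m →
          Function.update ω ⟨m, hm⟩ j i = ω i := by
        intro j i hi
        apply Function.update_of_ne
        intro hcon
        rw [hcon] at hi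
        exact absurd hi (lt_irrefl m)
      have hdep : ∀ j : Fin n, x (Function.update ω ⟨m, hm⟩ j) m = x ω m
          ∧ y (Function.update ω ⟨m, hm⟩ j) m = y ω m :=
        fun j => dep m (Nat.le_of_lt hm) _ ω (hagree j)
      have hyeq : ∀ j : Fin n,
          y (Function.update ω ⟨m, hm⟩ j) (m + 1) = y ω (m + 1) := by
        intro j
        rw [hystep' _ m hm, hystep' ω m hm, (hdep j).1, (hdep j).2]
      have hxeq : ∀ j : Fin n, x (Function.update ω ⟨m, hm⟩ j) (m + 1)
          = x ω m - (1 / L) • fi' j (y ω (m + 1)) := by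
        intro j
        rw [hxstep' _ m hm, (hdep j).1, hyeq j, Function.update_self]
      have hsa := step_avg hL fi fi' hgrad hconv hsmooth xstar hstar m
        (x ω m) (y ω m) (y ω (m + 1)) (hystep' ω m hm)
      rw [hsumf, hsumf, hsumf] at hsa
      calc ∑ j : Fin n, Φ (m + 1) (Function.update ω ⟨m, hm⟩ j)
          = (n : ℝ) * (((m : ℝ) + 1) * (f (y ω (m + 1)) - f xstar))
            + ∑ j : Fin n, (L / 2 * ‖(x ω m - (1 / L) • fi' j (y ω (m + 1))) - xstar‖ ^ 2) := by
            simp only [hΦ]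
            rw [Finset.sum_add_distrib]
            congr 1
            · rw [Finset.sum_congr rfl (fun j _ => by rw [hyeq j]), Finset.sum_const,
                Finset.card_univ, Fintype.card_fin, nsmul_eq_mul]
              push_cast
              ring
            · exact Finset.sum_congr rfl fun j _ => by rw [hxeq j]
        _ ≤ (n : ℝ) * (((m : ℝ) + 1) * (f (y ω (m + 1)) - f xstar))
            + ((n : ℝ) * (L / 2 * ‖x ω m - xstar‖ ^ 2)
              - (m : ℝ) * ((n : ℝ) * f (y ω (m + 1)) - (n : ℝ) * f (y ω m))
              - ((n : ℝ) * f (y ω (m + 1)) - (n : ℝ) * f xstar)) := by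
            linarith [hsa]
        _ = (n : ℝ) * Φ m ω := by
            simp only [hΦ]
            ring
    have hsu := sum_update (⟨m, hm⟩ : Fin N) (Φ (m + 1))
    have hle : (n : ℝ) * ∑ ω : Fin N → Fin n, Φ (m + 1) ω
        ≤ (n : ℝ) * ∑ ω : Fin N → Fin n, Φ m ω := by
      rw [← hsu, Finset.mul_sum]
      exact Finset.sum_le_sum fun ω _ => per ω
    exact le_of_mul_le_mul_left hle hnR
  -- telescoping
  have tele : ∀ m : ℕ, m ≤ N →
      ∑ ω : Fin N → Fin n, Φ m ω ≤ ∑ ω : Fin N → Fin n, Φ 0 ω := by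
    intro m
    induction m with
    | zero => intro _; exact le_refl _
    | succ m ih =>
      intro hm
      exact (step m hm).trans (ih (Nat.le_of_lt hm))
  have h0 : ∑ ω : Fin N → Fin n, Φ 0 ω = (n : ℝ) ^ N * (L / 2 * ‖x0 - xstar‖ ^ 2) := by
    simp only [hΦ, Nat.cast_zero, zero_mul, zero_add, hx0]
    rw [Finset.sum_const, Finset.card_univ, Fintype.card_fun, Fintype.card_fin,
      Fintype.card_fin, nsmul_eq_mul]
    push_cast
    ring
  have hfinal : (N : ℝ) * (∑ ω : Fin N → Fin n, f (y ω N))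
      - (N : ℝ) * (n : ℝ) ^ N * f xstar ≤ (n : ℝ) ^ N * (L / 2 * ‖x0 - xstar‖ ^ 2) := by
    have hlow : (N : ℝ) * (∑ ω : Fin N → Fin n, f (y ω N)) - (N : ℝ) * (n : ℝ) ^ N * f xstar
        ≤ ∑ ω : Fin N → Fin n, Φ N ω := by
      have : ∀ ω : Fin N → Fin n, (N : ℝ) * (f (y ω N) - f xstar) ≤ Φ N ω := by
        intro ω
        simp only [hΦ]
        nlinarith [sq_nonneg ‖x ω N - xstar‖, hL.le]
      calc (N : ℝ) * (∑ ω : Fin N → Fin n, f (y ω N)) - (N : ℝ) * (n : ℝ) ^ N * f xstar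
          = ∑ ω : Fin N → Fin n, (N : ℝ) * (f (y ω N) - f xstar) := by
            rw [Finset.sum_congr rfl (fun ω _ => mul_sub (N : ℝ) _ _), Finset.sum_sub_distrib,
              ← Finset.mul_sum, Finset.sum_const, Finset.card_univ, Fintype.card_fun,
              Fintype.card_fin, Fintype.card_fin, nsmul_eq_mul]
            push_cast
            ring
        _ ≤ ∑ ω : Fin N → Fin n, Φ N ω := Finset.sum_le_sum fun ω _ => this ω
    exact hlow.trans ((tele N le_rfl).trans_eq h0)
  have key : (N : ℝ) * (((n : ℝ) ^ N)⁻¹ * (∑ ω : Fin N → Fin n, f (y ω N)) - f xstar)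
      ≤ L * ‖x0 - xstar‖ ^ 2 / 2 := by
    have e1 : (N : ℝ) * (((n : ℝ) ^ N)⁻¹ * (∑ ω : Fin N → Fin n, f (y ω N)) - f xstar)
        = ((n : ℝ) ^ N)⁻¹ * ((N : ℝ) * (∑ ω : Fin N → Fin n, f (y ω N))
            - (N : ℝ) * (n : ℝ) ^ N * f xstar) := by
      field_simp
    rw [e1]
    calc ((n : ℝ) ^ N)⁻¹ * ((N : ℝ) * (∑ ω : Fin N → Fin n, f (y ω N))
            - (N : ℝ) * (n : ℝ) ^ N * f xstar)
        ≤ ((n : ℝ) ^ N)⁻¹ * ((n : ℝ) ^ N * (L / 2 * ‖x0 - xstar‖ ^ 2)) :=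
          mul_le_mul_of_nonneg_left hfinal (by positivity)
      _ = L * ‖x0 - xstar‖ ^ 2 / 2 := by
          field_simp
  rw [le_div_iff₀ (by positivity : (0 : ℝ) < 2 * (N : ℝ))]
  nlinarith [key]
end

section
/- Under the weak growth condition with constant ρ, the scheme y_{k+1} = (k/(k+2)) y_k + (2/(k+2)) x_k, x_{k+1} = x_k - (1/(2ρL)) G(y_{k+1}; i_k) satisfies E[f(y_k)] - f⋆ ≤ 2ρL‖x_0 - x⋆‖²/k for all k ≥ 1. -/
open Finset Filter Topology RealInnerProductSpace

lemma convex_grad_ineq {E : Type*} [NormedAddCommGroup E] [InnerProductSpace ℝ E]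
    [CompleteSpace E] {f : E → ℝ} {g z : E}
    (hconv : ConvexOn ℝ Set.univ f) (hg : HasGradientAt f g z) (w : E) :
    f z + ⟪g, w - z⟫ ≤ f w := by
  set v := w - z with hv
  have hline : HasDerivAt (fun t : ℝ => z + t • v) v 0 := by
    simpa using ((hasDerivAt_id (0:ℝ)).smul_const v).const_add z
  have hφ : HasDerivAt (fun t : ℝ => f (z + t • v)) ⟪g, v⟫ 0 := by
    have hz0 : HasFDerivAt f ((InnerProductSpace.toDual ℝ E) g) (z + (0:ℝ) • v) := by
      simpa using hg.hasFDerivAt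
    have h := hz0.comp_hasDerivAt 0 hline
    simp [InnerProductSpace.toDual_apply_apply] at h
    exact h
  have hslope : Tendsto (slope (fun t : ℝ => f (z + t • v)) 0) (𝓝[>] (0:ℝ))
      (𝓝 ⟪g, v⟫) := by
    have := hasDerivAt_iff_tendsto_slope.1 hφ
    exact this.mono_left (nhdsWithin_mono _ (fun t ht => ne_of_gt ht))
  have hbound : ∀ᶠ t in 𝓝[>] (0:ℝ), slope (fun t : ℝ => f (z + t • v)) 0 t ≤ f w - f z := by
    filter_upwards [Ioc_mem_nhdsGT_of_mem (Set.left_mem_Ico.2 zero_lt_one)] with t ht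
    have hcomb : z + t • v = (1 - t) • z + t • w := by
      rw [hv]; module
    have hc := hconv.2 (Set.mem_univ z) (Set.mem_univ w)
      (by linarith [ht.2] : (0:ℝ) ≤ 1 - t) ht.1.le (by ring)
    have hft : f (z + t • v) ≤ (1 - t) * f z + t * f w := by rw [hcomb]; simpa using hc
    rw [slope_def_field, div_le_iff₀ (by simpa using ht.1 : (0:ℝ) < t - 0)]
    simp only [zero_smul, add_zero]
    nlinarith
  have := le_of_tendsto hslope hbound
  linarith

lemma step_ineq {d n : ℕ} (hn : 0 < n) (L ρ : ℝ) (hL : 0 < L) (hρ : 1 ≤ ρ)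
    (f : EuclideanSpace ℝ (Fin d) → ℝ)
    (f' : EuclideanSpace ℝ (Fin d) → EuclideanSpace ℝ (Fin d))
    (hgrad : ∀ x, HasGradientAt f (f' x) x)
    (hconv : ConvexOn ℝ Set.univ f)
    (xstar : EuclideanSpace ℝ (Fin d))
    (G : EuclideanSpace ℝ (Fin d) → Fin n → EuclideanSpace ℝ (Fin d))
    (hunbiased : ∀ x, (n : ℝ)⁻¹ • (∑ i, G x i) = f' x)
    (hwg : ∀ x, (n : ℝ)⁻¹ * (∑ i, ‖G x i‖ ^ 2) ≤ 2 * ρ * L * (f x - f xstar))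
    (k : ℕ) (p yk z : EuclideanSpace ℝ (Fin d))
    (hz : z = ((k : ℝ) / ((k : ℝ) + 2)) • yk + (2 / ((k : ℝ) + 2)) • p) :
    ((k : ℝ) + 1) * (f z - f xstar)
      + 2 * ρ * L * ((n : ℝ)⁻¹ * ∑ j : Fin n, ‖(p - (1 / (2 * ρ * L)) • G z j) - xstar‖ ^ 2)
    ≤ (k : ℝ) * (f yk - f xstar) + 2 * ρ * L * ‖p - xstar‖ ^ 2 := by
  have hρ0 : (0:ℝ) < ρ := lt_of_lt_of_le one_pos hρ
  have hn0 : ((n:ℝ)) ≠ 0 := Nat.cast_ne_zero.2 hn.ne'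
  set δ : ℝ := 1 / (2 * ρ * L) with hδdef
  have hδpos : 0 < δ := by positivity
  have hδ1 : 2 * ρ * L * δ = 1 := by rw [hδdef]; field_simp
  -- geometry: p - z = (k/2) • (z - yk)
  have hk2 : ((k:ℝ) + 2) ≠ 0 := by positivity
  have hpz : p - z = ((k : ℝ) / 2) • (z - yk) := by
    rw [hz]; match_scalars <;> field_simp <;> ring
  -- sum expansion
  set I : ℝ := ⟪f' z, p - xstar⟫ with hI
  set S : ℝ := (n : ℝ)⁻¹ * ∑ j : Fin n, ‖G z j‖ ^ 2 with hS
  have hGsum : (∑ j : Fin n, G z j) = (n : ℝ) • f' z := by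
    rw [← hunbiased z, smul_smul]; field_simp; rw [one_smul]
  have hsum : (n : ℝ)⁻¹ * ∑ j : Fin n, ‖(p - δ • G z j) - xstar‖ ^ 2
      = ‖p - xstar‖ ^ 2 - 2 * δ * I + δ ^ 2 * S := by
    have expand : ∀ j : Fin n, ‖(p - δ • G z j) - xstar‖ ^ 2
        = ‖p - xstar‖ ^ 2 - 2 * δ * ⟪f' z, p - xstar⟫
          + δ ^ 2 * ‖G z j‖ ^ 2 - (2 * δ * ⟪G z j, p - xstar⟫
          - 2 * δ * ⟪f' z, p - xstar⟫) := by
      intro j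
      have h1 : (p - δ • G z j) - xstar = (p - xstar) - δ • G z j := by abel
      rw [h1, @norm_sub_sq_real, real_inner_smul_right, norm_smul, Real.norm_eq_abs,
        mul_pow, sq_abs, real_inner_comm]
      ring
    rw [Finset.sum_congr rfl (fun j _ => expand j)]
    have hinner : ∑ j : Fin n, ⟪G z j, p - xstar⟫ = (n : ℝ) * ⟪f' z, p - xstar⟫ := by
      rw [← sum_inner, hGsum, real_inner_smul_left]
    simp only [Finset.sum_sub_distrib, Finset.sum_add_distrib, Finset.sum_const,
      Finset.card_univ, Fintype.card_fin, ← Finset.mul_sum, hinner, hS, hI]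
    field_simp
    ring
  have hSb : S ≤ 2 * ρ * L * (f z - f xstar) := hwg z
  -- convexity bounds
  have hc1 : f z - f xstar ≤ ⟪f' z, z - xstar⟫ := by
    have := convex_grad_ineq hconv (hgrad z) xstar
    have h2 : ⟪f' z, xstar - z⟫ = -⟪f' z, z - xstar⟫ := by
      rw [show xstar - z = -(z - xstar) by abel, inner_neg_right]
    rw [h2] at this; linarith
  have hc2 : f z - f yk ≤ ⟪f' z, z - yk⟫ := by
    have := convex_grad_ineq hconv (hgrad z) yk
    have h2 : ⟪f' z, yk - z⟫ = -⟪f' z, z - yk⟫ := by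
      rw [show yk - z = -(z - yk) by abel, inner_neg_right]
    rw [h2] at this; linarith
  have hIb : (k : ℝ) / 2 * (f z - f yk) + (f z - f xstar) ≤ I := by
    have hd : p - xstar = ((k : ℝ) / 2) • (z - yk) + (z - xstar) := by
      rw [← hpz]; abel
    rw [hI, hd, inner_add_right, real_inner_smul_right]
    have hk0 : (0:ℝ) ≤ (k : ℝ) / 2 := by positivity
    nlinarith [mul_le_mul_of_nonneg_left hc2 hk0]
  -- assemble
  rw [hsum]
  have e1 : 2 * ρ * L * (2 * δ * I) = 2 * I := by linear_combination (2 * I) * hδ1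
  have e2 : 2 * ρ * L * (δ ^ 2 * S) = δ * S := by linear_combination (δ * S) * hδ1
  have e3 : δ * S ≤ f z - f xstar := by
    have := mul_le_mul_of_nonneg_left hSb hδpos.le
    calc δ * S ≤ δ * (2 * ρ * L * (f z - f xstar)) := this
      _ = f z - f xstar := by linear_combination (f z - f xstar) * hδ1
  nlinarith [hIb, e3]

/-- Telescoped rate under the weak growth condition:
`E f(y_N) - f⋆ ≤ 2ρL‖x0 - x⋆‖²/N`. -/
theorem weak_growth_primal_averaging_rate {d n N : ℕ} (hn : 0 < n) (hN : 1 ≤ N)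
    (L ρ : ℝ) (hL : 0 < L) (hρ : 1 ≤ ρ)
    (f : EuclideanSpace ℝ (Fin d) → ℝ)
    (f' : EuclideanSpace ℝ (Fin d) → EuclideanSpace ℝ (Fin d))
    (hgrad : ∀ x, HasGradientAt f (f' x) x)
    (hconv : ConvexOn ℝ Set.univ f)
    (hsmooth : ∀ x y, ‖f' x - f' y‖ ≤ L * ‖x - y‖)
    (xstar : EuclideanSpace ℝ (Fin d)) (hmin : ∀ y, f xstar ≤ f y)
    (G : EuclideanSpace ℝ (Fin d) → Fin n → EuclideanSpace ℝ (Fin d))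
    (hunbiased : ∀ x, (n : ℝ)⁻¹ • (∑ i, G x i) = f' x)
    (hwg : ∀ x, (n : ℝ)⁻¹ * (∑ i, ‖G x i‖ ^ 2) ≤ 2 * ρ * L * (f x - f xstar))
    (x0 : EuclideanSpace ℝ (Fin d))
    (x y : (Fin N → Fin n) → ℕ → EuclideanSpace ℝ (Fin d))
    (hx0 : ∀ ω, x ω 0 = x0) (hy0 : ∀ ω, y ω 0 = x0)
    (hystep : ∀ ω (k : Fin N),
      y ω (k.val + 1) = ((k.val : ℝ) / ((k.val : ℝ) + 2)) • y ω k.val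
        + (2 / ((k.val : ℝ) + 2)) • x ω k.val)
    (hxstep : ∀ ω (k : Fin N),
      x ω (k.val + 1) = x ω k.val - (1 / (2 * ρ * L)) • G (y ω (k.val + 1)) (ω k)) :
    ((n : ℝ) ^ N)⁻¹ * (∑ ω : Fin N → Fin n, f (y ω N)) - f xstar
      ≤ 2 * ρ * L * ‖x0 - xstar‖ ^ 2 / (N : ℝ) := by
  classical
  have hρ0 : (0:ℝ) < ρ := lt_of_lt_of_le one_pos hρ
  have hnR : (0:ℝ) < (n:ℝ) := by exact_mod_cast hn
  have hNR : (0:ℝ) < (N:ℝ) := by exact_mod_cast hN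
  -- trajectories up to time m depend only on the first m coordinates
  have dep : ∀ m : ℕ, m ≤ N → ∀ ω ω' : Fin N → Fin n,
      (∀ i : Fin N, (i : ℕ) < m → ω i = ω' i) →
      x ω m = x ω' m ∧ y ω m = y ω' m := by
    intro m
    induction m with
    | zero =>
        intro _ ω ω' _
        rw [hx0, hx0, hy0, hy0]; exact ⟨rfl, rfl⟩
    | succ m ih =>
        intro hm1 ω ω' h
        have hmN : m < N := hm1
        have hkey := ih (Nat.le_of_lt hmN) ω ω' (fun i hi => h i (Nat.lt_succ_of_lt hi))
        have hy1 : y ω (m + 1) = y ω' (m + 1) := by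
          have e1 : y ω (m + 1)
              = ((m : ℝ) / ((m : ℝ) + 2)) • y ω m + (2 / ((m : ℝ) + 2)) • x ω m :=
            hystep ω ⟨m, hmN⟩
          have e2 : y ω' (m + 1)
              = ((m : ℝ) / ((m : ℝ) + 2)) • y ω' m + (2 / ((m : ℝ) + 2)) • x ω' m :=
            hystep ω' ⟨m, hmN⟩
          rw [e1, e2, hkey.1, hkey.2]
        have hx1 : x ω (m + 1) = x ω' (m + 1) := by
          have e1 : x ω (m + 1)
              = x ω m - (1 / (2 * ρ * L)) • G (y ω (m + 1)) (ω ⟨m, hmN⟩) :=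
            hxstep ω ⟨m, hmN⟩
          have e2 : x ω' (m + 1)
              = x ω' m - (1 / (2 * ρ * L)) • G (y ω' (m + 1)) (ω' ⟨m, hmN⟩) :=
            hxstep ω' ⟨m, hmN⟩
          rw [e1, e2, hkey.1, hy1, h ⟨m, hmN⟩ (Nat.lt_succ_self m)]
        exact ⟨hx1, hy1⟩
  -- the potential
  set Φ : ℕ → ℝ := fun k => ∑ ω : Fin N → Fin n,
      ((k : ℝ) * (f (y ω k) - f xstar) + 2 * ρ * L * ‖x ω k - xstar‖ ^ 2) with hΦ
  -- one-step decrease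
  have hstep : ∀ k : ℕ, k < N → Φ (k + 1) ≤ Φ k := by
    intro k hk
    set kk : Fin N := ⟨k, hk⟩ with hkk
    set F : (Fin N → Fin n) → ℝ := fun ω' =>
      ((k : ℝ) + 1) * (f (y ω' (k + 1)) - f xstar)
        + 2 * ρ * L * ‖x ω' (k + 1) - xstar‖ ^ 2 with hF
    have key : ∀ ω : Fin N → Fin n,
        (n : ℝ)⁻¹ * ∑ j : Fin n, F (Function.update ω kk j)
          ≤ (k : ℝ) * (f (y ω k) - f xstar) + 2 * ρ * L * ‖x ω k - xstar‖ ^ 2 := by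
      intro ω
      set z : EuclideanSpace ℝ (Fin d) :=
        ((k : ℝ) / ((k : ℝ) + 2)) • y ω k + (2 / ((k : ℝ) + 2)) • x ω k with hzdef
      have hagree : ∀ j : Fin n,
          x (Function.update ω kk j) k = x ω k ∧ y (Function.update ω kk j) k = y ω k := by
        intro j
        refine dep k hk.le _ _ (fun i hi => ?_)
        have hne : (i : ℕ) ≠ kk.val := by rw [hkk]; exact Nat.ne_of_lt hi
        exact Function.update_of_ne (Fin.ne_of_val_ne hne) j ω
      have hyj : ∀ j : Fin n, y (Function.update ω kk j) (k + 1) = z := by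
        intro j
        have e1 : y (Function.update ω kk j) (k + 1)
            = ((k : ℝ) / ((k : ℝ) + 2)) • y (Function.update ω kk j) k
              + (2 / ((k : ℝ) + 2)) • x (Function.update ω kk j) k :=
          hystep _ kk
        rw [e1, (hagree j).1, (hagree j).2]
      have hxj : ∀ j : Fin n, x (Function.update ω kk j) (k + 1)
          = x ω k - (1 / (2 * ρ * L)) • G z j := by
        intro j
        have e1 : x (Function.update ω kk j) (k + 1)
            = x (Function.update ω kk j) k
              - (1 / (2 * ρ * L)) • G (y (Function.update ω kk j) (k + 1))
                  ((Function.update ω kk j) kk) :=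
          hxstep _ kk
        rw [e1, (hagree j).1, hyj j, Function.update_self]
      have hFval : ∀ j : Fin n, F (Function.update ω kk j)
          = ((k : ℝ) + 1) * (f z - f xstar)
            + 2 * ρ * L * ‖(x ω k - (1 / (2 * ρ * L)) • G z j) - xstar‖ ^ 2 := by
        intro j
        rw [hF]
        simp only
        rw [hyj j, hxj j]
      have hsplit : (n : ℝ)⁻¹ * ∑ j : Fin n, F (Function.update ω kk j)
          = ((k : ℝ) + 1) * (f z - f xstar)
            + 2 * ρ * L * ((n : ℝ)⁻¹
                * ∑ j : Fin n, ‖(x ω k - (1 / (2 * ρ * L)) • G z j) - xstar‖ ^ 2) := by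
        rw [Finset.sum_congr rfl (fun j _ => hFval j), Finset.sum_add_distrib,
          Finset.sum_const, Finset.card_univ, Fintype.card_fin, nsmul_eq_mul,
          ← Finset.mul_sum]
        field_simp
      rw [hsplit]
      exact step_ineq hn L ρ hL hρ f f' hgrad hconv xstar G hunbiased hwg
        k (x ω k) (y ω k) z hzdef
    -- double counting over the k-th coordinate
    have hΦk1 : Φ (k + 1) = ∑ ω : Fin N → Fin n, F ω := by
      rw [hΦ, hF]
      refine Finset.sum_congr rfl (fun ω _ => ?_)
      push_cast
      ring
    have hdouble : ∑ ω : Fin N → Fin n, ∑ j : Fin n, F (Function.update ω kk j)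
        = (n : ℝ) * ∑ ω : Fin N → Fin n, F ω := by
      have hinv : Function.Involutive
          (fun p : (Fin N → Fin n) × Fin n => (Function.update p.1 kk p.2, p.1 kk)) := by
        intro p
        exact Prod.ext (by simp [Function.update_idem]) (by simp)
      calc ∑ ω : Fin N → Fin n, ∑ j : Fin n, F (Function.update ω kk j)
          = ∑ p : (Fin N → Fin n) × Fin n, F (Function.update p.1 kk p.2) :=
            (Fintype.sum_prod_type
              (f := fun p : (Fin N → Fin n) × Fin n => F (Function.update p.1 kk p.2))).symm
        _ = ∑ p : (Fin N → Fin n) × Fin n, F p.1 :=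
            Fintype.sum_bijective _ hinv.bijective _ _ (fun p => rfl)
        _ = ∑ ω : Fin N → Fin n, ∑ _j : Fin n, F ω :=
            Fintype.sum_prod_type (f := fun p : (Fin N → Fin n) × Fin n => F p.1)
        _ = (n : ℝ) * ∑ ω : Fin N → Fin n, F ω := by
            simp [Finset.mul_sum, mul_comm]
    calc Φ (k + 1) = ∑ ω : Fin N → Fin n, F ω := hΦk1
      _ = ∑ ω : Fin N → Fin n,
            ((n : ℝ)⁻¹ * ∑ j : Fin n, F (Function.update ω kk j)) := by
          rw [← Finset.mul_sum, hdouble, ← mul_assoc, inv_mul_cancel₀ hnR.ne', one_mul]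
      _ ≤ ∑ ω : Fin N → Fin n,
            ((k : ℝ) * (f (y ω k) - f xstar) + 2 * ρ * L * ‖x ω k - xstar‖ ^ 2) :=
          Finset.sum_le_sum (fun ω _ => key ω)
      _ = Φ k := rfl
  -- telescope
  have htel : ∀ m : ℕ, m ≤ N → Φ m ≤ Φ 0 := by
    intro m
    induction m with
    | zero => intro _; exact le_refl _
    | succ m ih =>
        intro hm1
        exact le_trans (hstep m hm1) (ih (Nat.le_of_lt hm1))
  have hΦ0 : Φ 0 = (n : ℝ) ^ N * (2 * ρ * L * ‖x0 - xstar‖ ^ 2) := by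
    rw [hΦ]
    simp [hx0, Finset.sum_const, Finset.card_univ]
  have hΦN : (N : ℝ) * ∑ ω : Fin N → Fin n, (f (y ω N) - f xstar) ≤ Φ N := by
    rw [hΦ, Finset.mul_sum]
    refine Finset.sum_le_sum (fun ω _ => ?_)
    have : (0:ℝ) ≤ 2 * ρ * L * ‖x ω N - xstar‖ ^ 2 := by positivity
    linarith
  have hA : (N : ℝ) * ∑ ω : Fin N → Fin n, (f (y ω N) - f xstar)
      ≤ (n : ℝ) ^ N * (2 * ρ * L * ‖x0 - xstar‖ ^ 2) :=
    le_trans hΦN (by rw [← hΦ0]; exact htel N (le_refl N))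
  have hsub : ∑ ω : Fin N → Fin n, (f (y ω N) - f xstar)
      = (∑ ω : Fin N → Fin n, f (y ω N)) - (n : ℝ) ^ N * f xstar := by
    rw [Finset.sum_sub_distrib, Finset.sum_const, Finset.card_univ, nsmul_eq_mul]
    simp
  rw [hsub] at hA
  have hP : (0:ℝ) < (n : ℝ) ^ N := by positivity
  have hCN : (N : ℝ) * (2 * ρ * L * ‖x0 - xstar‖ ^ 2 / (N : ℝ))
      = 2 * ρ * L * ‖x0 - xstar‖ ^ 2 := by field_simp
  rw [sub_le_iff_le_add, inv_mul_le_iff₀ hP]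
  nlinarith [hA, hCN, hP, hNR]
end
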